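/- arXiv:1301.2754 — 2 statements merged into one kernel-verified Lean document; each statement's English description precedes it below -/
import Mathlib

section
/- Let G be a finite group acting on a set M, let g ∈ G, and let C_g denote the centralizer of g in G. The assignment sending an object (x, h) with h·x = x of the inertia groupoid of M//G to the pair (conjugacy class of h, element of fixed set) induces a bijection between isomorphism classes of the inertia groupoid Λ(M//G) and the disjoint union over conjugacy classes [g] of G of the orbit sets M^g / C_g, where M^g = {x ∈ M : g·x = x}. -/
/-- Isomorphism in the inertia groupoid `Λ(M//G)`: objects are pairs `(g, x)` with
`g • x = x`, and `(g, x) ≅ (g', x')` iff there is `h ∈ G` with `h • x = x'` and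
`h g h⁻¹ = g'`. -/
def inertiaSetoid (G : Type*) [Group G] (M : Type*) [MulAction G M] :
    Setoid {p : G × M // p.1 • p.2 = p.2} where
  r p q := ∃ h : G, h • p.1.2 = q.1.2 ∧ h * p.1.1 * h⁻¹ = q.1.1
  iseqv := by
    constructor
    · intro p; exact ⟨1, by simp, by simp⟩
    · rintro p q ⟨h, hx, hg⟩
      refine ⟨h⁻¹, ?_, ?_⟩
      · rw [← hx, inv_smul_smul]
      · rw [← hg]; group
    · rintro p q r ⟨h₁, hx₁, hg₁⟩ ⟨h₂, hx₂, hg₂⟩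
      refine ⟨h₂ * h₁, ?_, ?_⟩
      · rw [mul_smul, hx₁, hx₂]
      · rw [← hg₂, ← hg₁]; group

/-- The quotient of the fixed-point set `M^g` by the action of the centralizer `C_g`:
`x ~ y` iff there is `h` commuting with `g` such that `h • x = y`. -/
def fixedSetoid (G : Type*) [Group G] (M : Type*) [MulAction G M] (g : G) :
    Setoid {x : M // g • x = x} where
  r x y := ∃ h : G, h * g = g * h ∧ h • x.1 = y.1
  iseqv := by
    constructor
    · intro x; exact ⟨1, by simp, by simp⟩
    · rintro x y ⟨h, hc, hx⟩
      have hcomm : Commute h g := hc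
      exact ⟨h⁻¹, hcomm.inv_left, by rw [← hx, inv_smul_smul]⟩
    · rintro x y z ⟨h₁, hc₁, hx₁⟩ ⟨h₂, hc₂, hx₂⟩
      have hcomm₁ : Commute h₁ g := hc₁
      have hcomm₂ : Commute h₂ g := hc₂
      exact ⟨h₂ * h₁, hcomm₂.mul_left hcomm₁, by rw [mul_smul, hx₁, hx₂]⟩


section Aux
variable {G : Type*} [Group G] {M : Type*} [MulAction G M]

lemma ConjClasses.mk_out' (c : ConjClasses G) : ConjClasses.mk (Quotient.out c) = c :=
  Quotient.out_eq c

/-- The map `(c, [x]) ↦ [(c.out, x)]` from the sigma of fixed-point quotients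
to the inertia quotient. -/
noncomputable def inertiaInv
    (p : Σ c : ConjClasses G, Quotient (fixedSetoid G M (Quotient.out c))) :
    Quotient (inertiaSetoid G M) :=
  p.2.lift
    (fun x => Quotient.mk (inertiaSetoid G M) ⟨(p.1.out, x.1), x.2⟩)
    (by
      rintro x y ⟨h, hc, hx⟩
      refine Quotient.sound ⟨h, hx, ?_⟩
      show h * Quotient.out p.1 * h⁻¹ = Quotient.out p.1
      rw [hc]; group)

lemma inertiaInv_bijective :
    Function.Bijective (inertiaInv (G := G) (M := M)) := by
  constructor
  · rintro ⟨c, q⟩ ⟨c', q'⟩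
    induction q using Quotient.ind with | _ x =>
    induction q' using Quotient.ind with | _ y =>
    intro hEq
    obtain ⟨h, hx, hg⟩ := Quotient.exact hEq
    have hg' : h * Quotient.out c * h⁻¹ = Quotient.out c' := hg
    have hx' : h • x.1 = y.1 := hx
    have hcc : c = c' := by
      rw [← ConjClasses.mk_out' c, ← ConjClasses.mk_out' c',
        ConjClasses.mk_eq_mk_iff_isConj]
      exact isConj_iff.mpr ⟨h, hg'⟩
    subst hcc
    have hcm : h * Quotient.out c = Quotient.out c * h := by
      rw [mul_inv_eq_iff_eq_mul] at hg'
      exact hg'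
    exact Sigma.ext rfl (heq_of_eq (Quotient.sound ⟨h, hcm, hx'⟩))
  · intro q
    induction q using Quotient.ind with | _ p =>
    obtain ⟨⟨g, x⟩, hx⟩ := p
    simp only at hx
    have hconj : IsConj g (Quotient.out (ConjClasses.mk g)) := by
      rw [← ConjClasses.mk_eq_mk_iff_isConj, ConjClasses.mk_out']
    obtain ⟨k, hk⟩ := isConj_iff.mp hconj
    have hfix : Quotient.out (ConjClasses.mk g) • (k • x) = k • x := by
      rw [← hk]
      simp [mul_smul, hx]
    refine ⟨⟨ConjClasses.mk g, Quotient.mk (fixedSetoid G M _) ⟨k • x, hfix⟩⟩, ?_⟩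
    show Quotient.mk (inertiaSetoid G M) _ = Quotient.mk (inertiaSetoid G M) ⟨(g, x), hx⟩
    exact Quotient.sound ⟨k⁻¹, by simp, by show k⁻¹ * Quotient.out (ConjClasses.mk g) * k⁻¹⁻¹ = g; rw [← hk]; group⟩

end Aux

/-- The assignment `(g, x) ↦ (conjugacy class of g, class of x)` induces a bijection
between the isomorphism classes of the inertia groupoid `Λ(M//G)` and the disjoint
union, over conjugacy classes `[g]` of `G`, of the orbit sets `M^g / C_g`. -/
theorem inertia_iso_classes (G : Type*) [Group G] [Fintype G] (M : Type*) [MulAction G M] :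
    ∃ e : Quotient (inertiaSetoid G M) ≃
        Σ c : ConjClasses G, Quotient (fixedSetoid G M (Quotient.out c)),
      ∀ p : {p : G × M // p.1 • p.2 = p.2},
        (e (Quotient.mk (inertiaSetoid G M) p)).1 = ConjClasses.mk p.1.1 := by
  refine ⟨(Equiv.ofBijective _ inertiaInv_bijective).symm, fun p => ?_⟩
  set e := Equiv.ofBijective _ (inertiaInv_bijective (G := G) (M := M))
  set q := e.symm (Quotient.mk (inertiaSetoid G M) p) with hq
  have hge : inertiaInv q = Quotient.mk (inertiaSetoid G M) p := e.apply_symm_apply _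
  obtain ⟨c, q2⟩ := q
  induction q2 using Quotient.ind with | _ x =>
  obtain ⟨h, hx, hg⟩ := Quotient.exact hge
  have hg' : h * Quotient.out c * h⁻¹ = p.1.1 := hg
  show c = _
  rw [← ConjClasses.mk_out' c, ConjClasses.mk_eq_mk_iff_isConj]
  exact isConj_iff.mpr ⟨h, hg'⟩
end

section
/- The free commutative monoid functor on groupoids is exponential: for groupoids X and Y, there is an equivalence of groupoids S(X ⊔ Y) ≃ S(X) × S(Y), where S(X) = ⨿_{n≥0} S_n ∫ X is the total symmetric power (the action groupoid of S_n on Xⁿ together with X's morphisms). -/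
open CategoryTheory

universe v u

/-- Objects of the total symmetric power `S(X) = ⨿_{n≥0} S_n ∫ X`: a natural number `n`
together with an `n`-tuple of objects of `X`. -/
structure SPObj (X : Type u) [Category.{v} X] : Type u where
  n : ℕ
  obj : Fin n → X

/-- Morphisms `(x_1,…,x_n) → (y_1,…,y_m)` in `S(X)`: a bijection `σ` (which can exist
only when `n = m`) together with morphisms `g_i : x_i ⟶ y_{σ(i)}`. -/
structure SPHom {X : Type u} [Category.{v} X] (a b : SPObj X) : Type (max v u) where
  σ : Fin a.n ≃ Fin b.n
  g : ∀ i, a.obj i ⟶ b.obj (σ i)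

/-- The total symmetric power groupoid `S(X)` of a groupoid `X`. -/
instance SPcat (X : Type u) [Category.{v} X] : Category (SPObj X) where
  Hom := SPHom
  id a := ⟨Equiv.refl _, fun _ => 𝟙 _⟩
  comp f g := ⟨f.σ.trans g.σ, fun i => f.g i ≫ g.g (f.σ i)⟩
  id_comp f := by
    cases f with
    | mk σ g =>
      show SPHom.mk ((Equiv.refl _).trans σ) (fun i => 𝟙 _ ≫ g i) = SPHom.mk σ g
      simp
      rfl
  comp_id f := by
    cases f with
    | mk σ g =>
      show SPHom.mk (σ.trans (Equiv.refl _)) (fun i => g i ≫ 𝟙 _) = SPHom.mk σ g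
      simp
      rfl
  assoc f g h := by
    cases f; cases g; cases h
    show SPHom.mk _ _ = SPHom.mk _ _
    simp [Category.assoc]
    rfl

namespace SPaux

variable {X Y : Type u} [Category.{v} X] [Category.{v} Y]

@[simp] lemma comp_σ {a b c : SPObj X} (f : a ⟶ b) (g : b ⟶ c) :
    (f ≫ g).σ = f.σ.trans g.σ := rfl

@[simp] lemma comp_g {a b c : SPObj X} (f : a ⟶ b) (g : b ⟶ c) (i) :
    (f ≫ g).g i = f.g i ≫ g.g (f.σ i) := rfl

@[simp] lemma id_σ (a : SPObj X) : SPHom.σ (𝟙 a) = Equiv.refl _ := rfl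
@[simp] lemma id_g (a : SPObj X) (i) : SPHom.g (𝟙 a) i = 𝟙 _ := rfl

lemma sphom_ext {a b : SPObj X} (f g : a ⟶ b) (h : f.σ = g.σ)
    (h2 : ∀ i, f.g i ≫ eqToHom (by rw [h]) = g.g i) : f = g := by
  cases f using SPHom.casesOn with | mk σ₁ g₁ =>
  cases g using SPHom.casesOn with | mk σ₂ g₂ =>
  dsimp at h
  subst h
  simp only [eqToHom_refl, Category.comp_id] at h2
  congr 1
  funext i
  exact h2 i

lemma sphom_index {a b : SPObj X} (f : a ⟶ b) {i j : Fin a.n} (h : i = j) :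
    f.g i = eqToHom (by rw [h]) ≫ f.g j ≫ eqToHom (by rw [h]) := by
  subst h; simp

def objAux (a : SPObj X) (b : SPObj Y) : Fin a.n ⊕ Fin b.n → X ⊕ Y :=
  Sum.elim (fun i => Sum.inl (a.obj i)) (fun j => Sum.inr (b.obj j))

@[simp] lemma objAux_inl (a : SPObj X) (b : SPObj Y) (i) :
    objAux a b (Sum.inl i) = Sum.inl (a.obj i) := rfl
@[simp] lemma objAux_inr (a : SPObj X) (b : SPObj Y) (j) :
    objAux a b (Sum.inr j) = Sum.inr (b.obj j) := rfl

def homAux {a a' : SPObj X} {b b' : SPObj Y} (f : a ⟶ a') (g : b ⟶ b') :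
    ∀ s, objAux a b s ⟶ objAux a' b' ((f.σ.sumCongr g.σ) s)
  | Sum.inl i => (Sum.inl_ X Y).map (f.g i)
  | Sum.inr j => (Sum.inr_ X Y).map (g.g j)

@[simp] lemma homAux_inl {a a' : SPObj X} {b b' : SPObj Y} (f : a ⟶ a') (g : b ⟶ b') (i) :
    homAux f g (Sum.inl i) = (Sum.inl_ X Y).map (f.g i) := rfl
@[simp] lemma homAux_inr {a a' : SPObj X} {b b' : SPObj Y} (f : a ⟶ a') (g : b ⟶ b') (j) :
    homAux f g (Sum.inr j) = (Sum.inr_ X Y).map (g.g j) := rfl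

lemma homAux_index {a a' : SPObj X} {b b' : SPObj Y} (f : a ⟶ a') (g : b ⟶ b')
    {s t : Fin a.n ⊕ Fin b.n} (h : s = t) :
    homAux f g s = eqToHom (by rw [h]) ≫ homAux f g t ≫ eqToHom (by rw [h]) := by
  subst h; simp

@[simp] lemma prod_id_fst' (p : SPObj X × SPObj Y) : (𝟙 p : p ⟶ p).1 = 𝟙 p.1 := rfl
@[simp] lemma prod_id_snd' (p : SPObj X × SPObj Y) : (𝟙 p : p ⟶ p).2 = 𝟙 p.2 := rfl
@[simp] lemma prod_comp_fst' {p q r : SPObj X × SPObj Y} (f : p ⟶ q) (g : q ⟶ r) :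
    (f ≫ g).1 = f.1 ≫ g.1 := rfl
@[simp] lemma prod_comp_snd' {p q r : SPObj X × SPObj Y} (f : p ⟶ q) (g : q ⟶ r) :
    (f ≫ g).2 = f.2 ≫ g.2 := rfl

@[simp] lemma homAux_id (a : SPObj X) (b : SPObj Y) (s) :
    homAux (𝟙 a) (𝟙 b) s = eqToHom (by simp) := by
  cases s with
  | inl j => exact (eqToHom_refl (objAux a b (Sum.inl j)) rfl).symm
  | inr j => exact (eqToHom_refl (objAux a b (Sum.inr j)) rfl).symm

lemma homAux_comp_inl {p q r : SPObj X × SPObj Y} (f : p ⟶ q) (g : q ⟶ r) (j : Fin p.1.n) :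
    homAux (f ≫ g).1 (f ≫ g).2 (Sum.inl j)
      = homAux f.1 f.2 (Sum.inl j) ≫ homAux g.1 g.2 (Sum.inl (f.1.σ j)) := rfl

lemma homAux_comp_inr {p q r : SPObj X × SPObj Y} (f : p ⟶ q) (g : q ⟶ r) (j : Fin p.2.n) :
    homAux (f ≫ g).1 (f ≫ g).2 (Sum.inr j)
      = homAux f.1 f.2 (Sum.inr j) ≫ homAux g.1 g.2 (Sum.inr (f.2.σ j)) := rfl

abbrev Fobj (p : SPObj X × SPObj Y) : SPObj (X ⊕ Y) :=
  ⟨p.1.n + p.2.n, fun i => objAux p.1 p.2 (finSumFinEquiv.symm i)⟩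

@[simp] lemma Fobj_n (p : SPObj X × SPObj Y) : (Fobj p).n = p.1.n + p.2.n := rfl
@[simp] lemma Fobj_obj (p : SPObj X × SPObj Y) (i) :
    (Fobj p).obj i = objAux p.1 p.2 (finSumFinEquiv.symm i) := rfl

def Fmap {p q : SPObj X × SPObj Y} (f : p ⟶ q) : Fobj p ⟶ Fobj q :=
  ⟨finSumFinEquiv.symm.trans ((f.1.σ.sumCongr f.2.σ).trans finSumFinEquiv),
    fun i => homAux f.1 f.2 (finSumFinEquiv.symm i) ≫ eqToHom (by simp)⟩

@[simp] lemma Fmap_σ {p q : SPObj X × SPObj Y} (f : p ⟶ q) :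
    (Fmap f).σ = finSumFinEquiv.symm.trans ((f.1.σ.sumCongr f.2.σ).trans finSumFinEquiv) := rfl
@[simp] lemma Fmap_g {p q : SPObj X × SPObj Y} (f : p ⟶ q) (i) :
    (Fmap f).g i = homAux f.1 f.2 (finSumFinEquiv.symm i) ≫ eqToHom (by simp) := rfl

lemma Fmap_id (p : SPObj X × SPObj Y) : Fmap (𝟙 p) = 𝟙 (Fobj p) := by
  refine sphom_ext _ _ (by ext i; simp) ?_
  intro i
  simp
  repeat erw [Category.assoc]
  repeat erw [eqToHom_trans_assoc]
  repeat erw [eqToHom_trans]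
  repeat erw [eqToHom_refl]
  repeat erw [Category.id_comp]

set_option maxHeartbeats 1000000 in
lemma Fmap_comp {p q r : SPObj X × SPObj Y} (f : p ⟶ q) (g : q ⟶ r) :
    Fmap (f ≫ g) = Fmap f ≫ Fmap g := by
  refine sphom_ext _ _ (by ext i; simp) ?_
  intro i
  cases h : finSumFinEquiv.symm i with
  | inl j =>
    have e : finSumFinEquiv.symm ((Fmap f).σ i) = Sum.inl (f.1.σ j) := by simp [h]
    rw [comp_g, Fmap_g, Fmap_g, Fmap_g, homAux_index g.1 g.2 e,
      homAux_index (f ≫ g).1 (f ≫ g).2 h, homAux_index f.1 f.2 h,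
      homAux_comp_inl]
    simp
    repeat erw [Category.assoc]
    repeat erw [eqToHom_trans_assoc]
    repeat erw [eqToHom_trans]
    repeat erw [eqToHom_refl]
    repeat erw [Category.id_comp]
    rfl
  | inr j =>
    have e : finSumFinEquiv.symm ((Fmap f).σ i) = Sum.inr (f.2.σ j) := by simp [h]
    rw [comp_g, Fmap_g, Fmap_g, Fmap_g, homAux_index g.1 g.2 e,
      homAux_index (f ≫ g).1 (f ≫ g).2 h, homAux_index f.1 f.2 h,
      homAux_comp_inr]
    simp
    repeat erw [Category.assoc]
    repeat erw [eqToHom_trans_assoc]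
    repeat erw [eqToHom_trans]
    repeat erw [eqToHom_refl]
    repeat erw [Category.id_comp]
    rfl

def F : SPObj X × SPObj Y ⥤ SPObj (X ⊕ Y) where
  obj := Fobj
  map := Fmap
  map_id := Fmap_id
  map_comp := Fmap_comp

section Full

variable {p q : SPObj X × SPObj Y} (h : Fobj p ⟶ Fobj q)

/-- The permutation of `h` transported to the disjoint sum of index sets. -/
def τ : Fin p.1.n ⊕ Fin p.2.n ≃ Fin q.1.n ⊕ Fin q.2.n :=
  finSumFinEquiv.trans (h.σ.trans finSumFinEquiv.symm)

/-- The component morphisms of `h` transported to the disjoint sum of index sets. -/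
def Hg (s : Fin p.1.n ⊕ Fin p.2.n) : objAux p.1 p.2 s ⟶ objAux q.1 q.2 (τ h s) :=
  eqToHom (by simp) ≫ h.g (finSumFinEquiv s)

lemma tll (i : Fin p.1.n) : ∃ j, τ h (Sum.inl i) = Sum.inl j := by
  cases ht : τ h (Sum.inl i) with
  | inl j => exact ⟨j, rfl⟩
  | inr k =>
    exact (hom_inl_inr_false _ _
      (Hg h (Sum.inl i) ≫ eqToHom (congrArg (objAux q.1 q.2) ht))).elim

lemma trr (k : Fin p.2.n) : ∃ j, τ h (Sum.inr k) = Sum.inr j := by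
  cases ht : τ h (Sum.inr k) with
  | inr j => exact ⟨j, rfl⟩
  | inl j =>
    exact (hom_inr_inl_false _ _
      (Hg h (Sum.inr k) ≫ eqToHom (congrArg (objAux q.1 q.2) ht))).elim

lemma sll (i : Fin q.1.n) : ∃ j, (τ h).symm (Sum.inl i) = Sum.inl j := by
  cases ht : (τ h).symm (Sum.inl i) with
  | inl j => exact ⟨j, rfl⟩
  | inr k =>
    obtain ⟨m, hm⟩ := trr h k
    have : τ h (Sum.inr k) = Sum.inl i := by rw [← ht, Equiv.apply_symm_apply]
    rw [hm] at this
    exact absurd this (by simp)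

lemma srr (k : Fin q.2.n) : ∃ j, (τ h).symm (Sum.inr k) = Sum.inr j := by
  cases ht : (τ h).symm (Sum.inr k) with
  | inr j => exact ⟨j, rfl⟩
  | inl j =>
    obtain ⟨m, hm⟩ := tll h j
    have : τ h (Sum.inl j) = Sum.inr k := by rw [← ht, Equiv.apply_symm_apply]
    rw [hm] at this
    exact absurd this (by simp)

/-- The `X`-component of the permutation of `h`. -/
noncomputable def σ1 : Fin p.1.n ≃ Fin q.1.n where
  toFun i := (tll h i).choose
  invFun j := (sll h j).choose
  left_inv i := by
    have h1 := (tll h i).choose_spec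
    have h2 := (sll h (tll h i).choose).choose_spec
    apply Sum.inl_injective
    rw [← h2, ← h1, Equiv.symm_apply_apply]
  right_inv j := by
    have h1 := (sll h j).choose_spec
    have h2 := (tll h (sll h j).choose).choose_spec
    apply Sum.inl_injective
    rw [← h2, ← h1, Equiv.apply_symm_apply]

/-- The `Y`-component of the permutation of `h`. -/
noncomputable def σ2 : Fin p.2.n ≃ Fin q.2.n where
  toFun i := (trr h i).choose
  invFun j := (srr h j).choose
  left_inv i := by
    have h1 := (trr h i).choose_spec
    have h2 := (srr h (trr h i).choose).choose_spec
    apply Sum.inr_injective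
    rw [← h2, ← h1, Equiv.symm_apply_apply]
  right_inv j := by
    have h1 := (srr h j).choose_spec
    have h2 := (trr h (srr h j).choose).choose_spec
    apply Sum.inr_injective
    rw [← h2, ← h1, Equiv.apply_symm_apply]

lemma tau_spec1 (i : Fin p.1.n) : τ h (Sum.inl i) = Sum.inl (σ1 h i) :=
  (tll h i).choose_spec

lemma tau_spec2 (k : Fin p.2.n) : τ h (Sum.inr k) = Sum.inr (σ2 h k) :=
  (trr h k).choose_spec

/-- The `X`-component of `h`. -/
noncomputable def f1 : p.1 ⟶ q.1 :=
  ⟨σ1 h, fun i =>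
    (show (Sum.inl (p.1.obj i) : X ⊕ Y) ⟶ Sum.inl (q.1.obj (σ1 h i)) from
      Hg h (Sum.inl i) ≫ eqToHom (congrArg (objAux q.1 q.2) (tau_spec1 h i))).down⟩

/-- The `Y`-component of `h`. -/
noncomputable def f2 : p.2 ⟶ q.2 :=
  ⟨σ2 h, fun k =>
    (show (Sum.inr (p.2.obj k) : X ⊕ Y) ⟶ Sum.inr (q.2.obj (σ2 h k)) from
      Hg h (Sum.inr k) ≫ eqToHom (congrArg (objAux q.1 q.2) (tau_spec2 h k))).down⟩

@[simp] lemma f1_σ : (f1 h).σ = σ1 h := rfl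
@[simp] lemma f2_σ : (f2 h).σ = σ2 h := rfl

lemma homAux_f_inl (i : Fin p.1.n) :
    homAux (f1 h) (f2 h) (Sum.inl i)
      = Hg h (Sum.inl i) ≫ eqToHom (congrArg (objAux q.1 q.2) (tau_spec1 h i)) := rfl

lemma homAux_f_inr (k : Fin p.2.n) :
    homAux (f1 h) (f2 h) (Sum.inr k)
      = Hg h (Sum.inr k) ≫ eqToHom (congrArg (objAux q.1 q.2) (tau_spec2 h k)) := rfl

lemma sphom_g_congr {a b : SPObj (X ⊕ Y)} {u u' : a ⟶ b} (e : u = u') (i) :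
    u.g i = u'.g i ≫ eqToHom (by rw [e]) := by subst e; simp

lemma sumCongr_eq (s : Fin p.1.n ⊕ Fin p.2.n) :
    ((σ1 h).sumCongr (σ2 h)) s = τ h s := by
  cases s with
  | inl i => simp [tau_spec1 h i]
  | inr k => simp [tau_spec2 h k]

lemma Fmap_full : Fmap ((f1 h, f2 h) : p ⟶ q) = h := by
  have hσ : ∀ s, finSumFinEquiv (((σ1 h).sumCongr (σ2 h)) s) = h.σ (finSumFinEquiv s) := by
    intro s
    rw [sumCongr_eq]
    simp [τ]
  refine sphom_ext _ _ ?_ ?_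
  · ext k
    have : (Fmap ((f1 h, f2 h) : p ⟶ q)).σ k
        = finSumFinEquiv (((σ1 h).sumCongr (σ2 h)) (finSumFinEquiv.symm k)) := by simp
    rw [this, hσ]
    simp
  · intro k
    cases hk : finSumFinEquiv.symm k with
    | inl i =>
      have ek : finSumFinEquiv (Sum.inl i) = k := by rw [← hk]; simp
      rw [Fmap_g, homAux_index _ _ hk]
      dsimp only
      rw [homAux_f_inl, Hg, sphom_index h ek.symm]
      simp
      repeat erw [Category.assoc]
      repeat erw [eqToHom_trans_assoc]
      repeat erw [eqToHom_trans]
      repeat erw [eqToHom_refl]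
      repeat erw [Category.id_comp]
      rfl
    | inr i =>
      have ek : finSumFinEquiv (Sum.inr i) = k := by rw [← hk]; simp
      rw [Fmap_g, homAux_index _ _ hk]
      dsimp only
      rw [homAux_f_inr, Hg, sphom_index h ek.symm]
      simp
      repeat erw [Category.assoc]
      repeat erw [eqToHom_trans_assoc]
      repeat erw [eqToHom_trans]
      repeat erw [eqToHom_refl]
      repeat erw [Category.id_comp]
      rfl

end Full

section Faithful

instance : (Sum.inl_ X Y).Faithful := ⟨fun {_ _} {_ _} e => congrArg ULift.down e⟩
instance : (Sum.inr_ X Y).Faithful := ⟨fun {_ _} {_ _} e => congrArg ULift.down e⟩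

lemma homAux_map_inl {a a' : SPObj X} {b b' : SPObj Y} (u : a ⟶ a') (v : b ⟶ b') (i) :
    homAux u v (Sum.inl i) = (Sum.inl_ X Y).map (u.g i) := rfl

lemma homAux_map_inr {a a' : SPObj X} {b b' : SPObj Y} (u : a ⟶ a') (v : b ⟶ b') (i) :
    homAux u v (Sum.inr i) = (Sum.inr_ X Y).map (v.g i) := rfl

lemma Fmap_inj {p q : SPObj X × SPObj Y} {f f' : p ⟶ q} (e : Fmap f = Fmap f') : f = f' := by
  have hσ : ∀ s, (f.1.σ.sumCongr f.2.σ) s = (f'.1.σ.sumCongr f'.2.σ) s := by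
    intro s
    have h2 := congrArg (fun t => SPHom.σ t (finSumFinEquiv s)) e
    simpa using h2
  have hσ1 : f.1.σ = f'.1.σ := by
    ext i; exact congrArg Fin.val (by simpa using hσ (Sum.inl i))
  have hσ2 : f.2.σ = f'.2.σ := by
    ext i; exact congrArg Fin.val (by simpa using hσ (Sum.inr i))
  have hg : ∀ s, homAux f.1 f.2 s ≫ eqToHom (congrArg (objAux q.1 q.2) (hσ s))
      = homAux f'.1 f'.2 s := by
    intro s
    have h3 := sphom_g_congr e (finSumFinEquiv s)
    have hk : s = finSumFinEquiv.symm (finSumFinEquiv s) := (Equiv.symm_apply_apply _ _).symm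
    rw [homAux_index f.1 f.2 hk, homAux_index f'.1 f'.2 hk]
    have l1 : homAux f.1 f.2 (finSumFinEquiv.symm (finSumFinEquiv s))
        = (Fmap f).g (finSumFinEquiv s) ≫ eqToHom (by simp) := by
        rw [Fmap_g]; simp
        repeat erw [Category.assoc]
        repeat erw [eqToHom_trans_assoc]
        repeat erw [eqToHom_trans]
        repeat erw [eqToHom_refl]
        repeat erw [Category.id_comp]
        erw [Category.comp_id]
    have l2 : homAux f'.1 f'.2 (finSumFinEquiv.symm (finSumFinEquiv s))
        = (Fmap f').g (finSumFinEquiv s) ≫ eqToHom (by simp) := by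
        rw [Fmap_g]; simp
        repeat erw [Category.assoc]
        repeat erw [eqToHom_trans_assoc]
        repeat erw [eqToHom_trans]
        repeat erw [eqToHom_refl]
        repeat erw [Category.id_comp]
        erw [Category.comp_id]
    rw [l1, l2, h3]
    simp
    repeat erw [Category.assoc]
    repeat erw [eqToHom_trans_assoc]
    repeat erw [eqToHom_trans]
    repeat erw [eqToHom_refl]
    repeat erw [Category.id_comp]
  apply Prod.ext
  · refine sphom_ext _ _ hσ1 ?_
    intro i
    apply (Sum.inl_ X Y).map_injective
    rw [Functor.map_comp, eqToHom_map, ← homAux_map_inl f.1 f.2 i, ← homAux_map_inl f'.1 f'.2 i]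
    exact hg (Sum.inl i)
  · refine sphom_ext _ _ hσ2 ?_
    intro i
    apply (Sum.inr_ X Y).map_injective
    rw [Functor.map_comp, eqToHom_map, ← homAux_map_inr f.1 f.2 i, ← homAux_map_inr f'.1 f'.2 i]
    exact hg (Sum.inr i)

end Faithful

section EssSurj

variable (c : SPObj (X ⊕ Y))

def pL : Fin c.n → Prop := fun i => ∃ x, c.obj i = Sum.inl x

lemma right_ex {i : Fin c.n} (h : ¬ pL c i) : ∃ y, c.obj i = Sum.inr y := by
  cases hx : c.obj i with
  | inl x => exact absurd ⟨x, hx⟩ h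
  | inr y => exact ⟨y, rfl⟩

open Classical in
/-- Splitting of an object of `S(X ⊔ Y)` into its `X`-part and `Y`-part. -/
noncomputable abbrev Gobj : SPObj X × SPObj Y :=
  (⟨Fintype.card {i // pL c i},
      fun j => (((Fintype.equivFin {i // pL c i}).symm j).2).choose⟩,
   ⟨Fintype.card {i // ¬ pL c i},
      fun j => (right_ex c ((Fintype.equivFin {i // ¬ pL c i}).symm j).2).choose⟩)

open Classical in
noncomputable def ψ : Fin ((Gobj c).1.n + (Gobj c).2.n) ≃ Fin c.n :=
  finSumFinEquiv.symm.trans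
    ((((Fintype.equivFin {i // pL c i}).symm).sumCongr
        ((Fintype.equivFin {i // ¬ pL c i}).symm)).trans (Equiv.sumCompl (pL c)))

open Classical in
lemma key (i) : (Fobj (Gobj c)).obj i = c.obj (ψ c i) := by
  rw [Fobj_obj]
  show objAux (Gobj c).1 (Gobj c).2 (finSumFinEquiv.symm i) = _
  have : ψ c i = (Equiv.sumCompl (pL c))
      ((((Fintype.equivFin {i // pL c i}).symm).sumCongr
        ((Fintype.equivFin {i // ¬ pL c i}).symm)) (finSumFinEquiv.symm i)) := rfl
  rw [this]
  cases hs : finSumFinEquiv.symm i with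
  | inl j =>
    rw [objAux_inl]
    simp only [Equiv.sumCongr_apply, Sum.map_inl, Equiv.sumCompl_apply_inl]
    exact ((((Fintype.equivFin {i // pL c i}).symm j).2).choose_spec).symm
  | inr j =>
    rw [objAux_inr]
    simp only [Equiv.sumCongr_apply, Sum.map_inr, Equiv.sumCompl_apply_inr]
    exact ((right_ex c ((Fintype.equivFin {i // ¬ pL c i}).symm j).2).choose_spec).symm

noncomputable def Giso : Fobj (Gobj c) ≅ c where
  hom := ⟨ψ c, fun i => eqToHom (key c i)⟩
  inv := ⟨(ψ c).symm, fun i =>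
    eqToHom (((key c ((ψ c).symm i)).trans (congrArg c.obj ((ψ c).apply_symm_apply i))).symm)⟩
  hom_inv_id := by
    refine sphom_ext _ _ (by ext i; simp) ?_
    intro i
    simp
    repeat erw [Category.assoc]
    repeat erw [eqToHom_trans_assoc]
    repeat erw [eqToHom_trans]
    repeat erw [eqToHom_refl]
    repeat erw [Category.id_comp]
  inv_hom_id := by
    refine sphom_ext _ _ (by ext i; simp) ?_
    intro i
    simp
    repeat erw [Category.assoc]
    repeat erw [eqToHom_trans_assoc]
    repeat erw [eqToHom_trans]
    repeat erw [eqToHom_refl]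
    repeat erw [Category.id_comp]

end EssSurj

end SPaux

/-- The total symmetric power is exponential: for groupoids `X` and `Y` there is an
equivalence of groupoids `S(X ⊔ Y) ≃ S(X) × S(Y)`. -/
theorem sp_exponential (X Y : Type u) [Groupoid.{v} X] [Groupoid.{v} Y] :
    Nonempty (SPObj (X ⊕ Y) ≌ SPObj X × SPObj Y) := by
  open SPaux in
  let Φ : SPObj X × SPObj Y ⥤ SPObj (X ⊕ Y) := SPaux.F
  haveI : Φ.Full := ⟨fun {p q} h => ⟨(SPaux.f1 h, SPaux.f2 h), SPaux.Fmap_full h⟩⟩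
  haveI : Φ.Faithful := ⟨fun {p q} {f f'} e => SPaux.Fmap_inj e⟩
  haveI : Φ.EssSurj := ⟨fun c => ⟨SPaux.Gobj c, ⟨SPaux.Giso c⟩⟩⟩
  haveI : Φ.IsEquivalence := {}
  exact ⟨Φ.asEquivalence.symm⟩
end
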